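/- If C₀ is a positive definite trace-class operator on a separable Hilbert space X and W : X → X is a bounded self-adjoint positive finite-rank operator, then the operator C₀^{-1/2} W C₀^{-1/2} (defined on the range of C₀^{1/2}, extended appropriately) is Hilbert–Schmidt. -/

import Mathlib

open scoped RealInnerProductSpace

/-- `T` is a Hilbert–Schmidt operator: for every Hilbert basis the squared norms of the
images of the basis vectors are summable (this is basis-independent). -/
def IsHilbertSchmidt {X : Type*} [NormedAddCommGroup X] [InnerProductSpace ℝ X]
    (T : X →L[ℝ] X) : Prop :=
  ∀ ⦃ι : Type⦄ (b : HilbertBasis ι ℝ X), Summable fun i => ‖T (b i)‖ ^ 2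

/-- If `C₀` is a positive definite trace-class operator on a separable Hilbert space `X`
(separability and the trace-class property are encoded by the Hilbert basis `b` indexed
by `ℕ` with summable diagonal of `C₀`), `S = C₀^{1/2}` is its positive square root, `W`
is a bounded self-adjoint positive finite-rank operator, and `T` is the bounded operator
with `S T S = W` (i.e. `T` is the appropriate extension of `C₀^{-1/2} W C₀^{-1/2}`), then
`T` is Hilbert–Schmidt. -/
theorem stmt0 {X : Type} [NormedAddCommGroup X] [InnerProductSpace ℝ X] [CompleteSpace X]
    (C₀ S W T : X →L[ℝ] X)
    (hC₀sa : IsSelfAdjoint C₀) (hC₀pos : ∀ x, 0 ≤ ⟪C₀ x, x⟫) (hC₀inj : Function.Injective C₀)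
    (b : HilbertBasis ℕ ℝ X) (htrace : Summable fun i => ⟪C₀ (b i), b i⟫)
    (hSsa : IsSelfAdjoint S) (hSpos : ∀ x, 0 ≤ ⟪S x, x⟫) (hS : S ∘L S = C₀)
    (hWsa : IsSelfAdjoint W) (hWpos : ∀ x, 0 ≤ ⟪W x, x⟫)
    (hWfr : FiniteDimensional ℝ (LinearMap.range (W : X →ₗ[ℝ] X)))
    (hT : S ∘L T ∘L S = W) :
    IsHilbertSchmidt T := by
  -- symmetry facts
  have hSsym : ∀ x y : X, ⟪S x, y⟫ = ⟪x, S y⟫ := fun x y => hSsa.isSymmetric x y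
  have hWsym : ∀ x y : X, ⟪W x, y⟫ = ⟪x, W y⟫ := fun x y => hWsa.isSymmetric x y
  -- S is injective
  have hSinj : Function.Injective S := by
    have hcomp : (⇑S ∘ ⇑S) = ⇑C₀ := by rw [← hS]; rfl
    exact Function.Injective.of_comp (f := ⇑S) (g := ⇑S) (by rw [hcomp]; exact hC₀inj)
  -- S has dense range
  have hdense : Dense (Set.range ⇑S) := by
    have h1 : (LinearMap.range (S : X →ₗ[ℝ] X))ᗮ = ⊥ := by
      rw [Submodule.eq_bot_iff]
      intro x hx
      have hx' : ∀ y : X, ⟪S y, x⟫ = 0 := fun y =>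
        hx (S y) (LinearMap.mem_range_self _ y)
      have hSx : S x = 0 := by
        have : ⟪S x, S x⟫ = 0 := by
          rw [← hSsym]; exact hx' (S x)
        exact inner_self_eq_zero.mp this
      exact hSinj (by simpa using hSx)
    have h2 : (LinearMap.range (S : X →ₗ[ℝ] X)).topologicalClosure = ⊤ :=
      Submodule.topologicalClosure_eq_top_iff.mpr h1
    have h3 : closure (↑(LinearMap.range (S : X →ₗ[ℝ] X)) : Set X) = Set.univ := by
      have := congrArg (fun K : Submodule ℝ X => (K : Set X)) h2
      simpa [Submodule.topologicalClosure_coe] using this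
    have h4 : (↑(LinearMap.range (S : X →ₗ[ℝ] X)) : Set X) = Set.range ⇑S := by
      ext z; simp [LinearMap.mem_range]
    rw [dense_iff_closure_eq, ← h4]
    exact h3
  -- T kills S of the kernel of W
  have hker : ∀ x : X, W x = 0 → T (S x) = 0 := by
    intro x hx
    have h1 : ∀ y : X, ⟪T (S x), S y⟫ = 0 := by
      intro y
      have hSTS : S (T (S x)) = W x := by
        have := congrArg (fun A : X →L[ℝ] X => A x) hT
        simpa using this
      calc ⟪T (S x), S y⟫ = ⟪S (T (S x)), y⟫ := (hSsym _ _).symm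
        _ = ⟪W x, y⟫ := by rw [hSTS]
        _ = 0 := by rw [hx]; simp
    have h2 : ∀ z : X, ⟪T (S x), z⟫ = 0 := by
      have heq : Set.EqOn (fun z : X => ⟪T (S x), z⟫) (fun _ => (0 : ℝ))
          (Set.range ⇑S) := by
        rintro _ ⟨y, rfl⟩
        exact h1 y
      have := Continuous.ext_on hdense
        (continuous_const.inner continuous_id) continuous_const heq
      intro z
      exact congrFun this z
    exact inner_self_eq_zero.mp (h2 (T (S x)))
  -- the finite-dimensional target space
  set V : Submodule ℝ X := LinearMap.range (W : X →ₗ[ℝ] X) with hV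
  haveI : FiniteDimensional ℝ V := hWfr
  set F : Submodule ℝ X := V.map ((T ∘L S : X →L[ℝ] X) : X →ₗ[ℝ] X) with hF
  haveI hFfd : FiniteDimensional ℝ F := Module.Finite.map V _
  -- orthogonal complement of V is inside ker W
  have hVle : ∀ x : X, x ∈ Vᗮ → W x = 0 := by
    intro x hx
    have h := hx (W (W x)) (LinearMap.mem_range_self _ (W x))
    rw [hWsym] at h
    exact inner_self_eq_zero.mp h
  -- T maps range S into F
  have hstep : ∀ x : X, T (S x) ∈ F := by
    intro x
    haveI : CompleteSpace V := FiniteDimensional.complete ℝ V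
    set p : X := (V.orthogonalProjectionOnto x : X) with hp
    have hxp : x - p ∈ Vᗮ := V.sub_starProjection_mem_orthogonal x
    have h0 : T (S (x - p)) = 0 := hker _ (hVle _ hxp)
    have hxe : x = p + (x - p) := by abel
    have hdecomp : T (S x) = T (S p) + T (S (x - p)) := by
      conv_lhs => rw [hxe]
      rw [map_add, map_add]
    rw [hdecomp, h0, add_zero]
    exact ⟨p, (V.orthogonalProjectionOnto x).2, rfl⟩
  -- hence T maps everything into F (density + F closed)
  have hTF : ∀ y : X, T y ∈ F := by
    have hclosed : IsClosed (⇑T ⁻¹' (F : Set X)) :=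
      (F.closed_of_finiteDimensional).preimage T.continuous
    have hsub : Set.range ⇑S ⊆ ⇑T ⁻¹' (F : Set X) := by
      rintro _ ⟨x, rfl⟩
      exact hstep x
    have : closure (Set.range ⇑S) ⊆ ⇑T ⁻¹' (F : Set X) :=
      closure_minimal hsub hclosed
    intro y
    exact this (by rw [hdense.closure_eq]; trivial)
  -- Now prove Hilbert–Schmidt via Parseval over a finite orthonormal basis of F
  intro ι hb
  let u := stdOrthonormalBasis ℝ F
  have key : ∀ x : X, ‖T x‖ ^ 2 =
      ∑ k, ⟪x, (ContinuousLinearMap.adjoint T) ((u k : F) : X)⟫ ^ 2 := by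
    intro x
    set z : F := ⟨T x, hTF x⟩ with hz
    have h1 : ‖T x‖ ^ 2 = ⟪z, z⟫ := by
      rw [real_inner_self_eq_norm_sq]
      simp [hz]
    have h2 : ⟪z, z⟫ = ∑ k, ⟪z, u k⟫ * ⟪u k, z⟫ :=
      (u.sum_inner_mul_inner z z).symm
    rw [h1, h2]
    refine Finset.sum_congr rfl fun k _ => ?_
    have hzk : ⟪z, u k⟫ = ⟪T x, ((u k : F) : X)⟫ := rfl
    have hkz : ⟪u k, z⟫ = ⟪((u k : F) : X), T x⟫ := rfl
    rw [hzk, hkz, ContinuousLinearMap.adjoint_inner_right, sq, real_inner_comm]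
  have : (fun i => ‖T (hb i)‖ ^ 2) =
      fun i => ∑ k, ⟪hb i, (ContinuousLinearMap.adjoint T) ((u k : F) : X)⟫ ^ 2 := by
    funext i
    exact key (hb i)
  rw [this]
  apply summable_sum
  intro k _
  have hsum := hb.summable_inner_mul_inner
    ((ContinuousLinearMap.adjoint T) ((u k : F) : X))
    ((ContinuousLinearMap.adjoint T) ((u k : F) : X))
  refine hsum.congr fun i => ?_
  rw [sq, real_inner_comm]
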